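/- Let X be a d×d positive definite Hermitian matrix and P a d×d positive semidefinite Hermitian matrix, and let P' := P + X^{-1/2}(I_d − X^{1/2} P X^{1/2})_+ X^{-1/2}. Then P' is positive definite (hence invertible) and Tr(X(P' − P)) = Tr(P'^{-1}(P' − P)). -/

import Mathlib

open Matrix
open scoped ComplexOrder

/-- The positive part `M₊` of a Hermitian matrix: keep the spectral decomposition but set
all negative eigenvalues to zero (junk value `0` if `M` is not Hermitian). -/
noncomputable def matPosPart {d : ℕ} (M : Matrix (Fin d) (Fin d) ℂ) :
    Matrix (Fin d) (Fin d) ℂ :=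
  if hM : M.IsHermitian then
    (hM.eigenvectorUnitary : Matrix (Fin d) (Fin d) ℂ) *
      Matrix.diagonal (fun i => ((max (hM.eigenvalues i) 0 : ℝ) : ℂ)) *
      star (hM.eigenvectorUnitary : Matrix (Fin d) (Fin d) ℂ)
  else 0

lemma posDef_conj_aux {n : Type*} [Fintype n] [DecidableEq n] {A N : Matrix n n ℂ}
    (hA : A.PosDef) (hN : IsUnit N) : (Nᴴ * A * N).PosDef := by
  refine posDef_iff_dotProduct_mulVec.mpr ⟨isHermitian_conjTranspose_mul_mul N hA.1, fun x hx => ?_⟩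
  have hNx : N *ᵥ x ≠ 0 := by
    intro h
    apply hx
    have := congrArg (fun v => N⁻¹ *ᵥ v) h
    simpa [mulVec_mulVec, nonsing_inv_mul N ((isUnit_iff_isUnit_det N).mp hN)] using this
  simpa only [star_mulVec, dotProduct_mulVec, vecMul_vecMul] using hA.dotProduct_mulVec_pos hNx

/-- Let `X` be PD Hermitian, `P` PSD Hermitian, and
`P' := P + X^{-1/2}(I − X^{1/2} P X^{1/2})₊ X^{-1/2}`. Then `P'` is positive definite
(hence invertible) and `Tr(X(P' − P)) = Tr(P'⁻¹(P' − P))`.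
Here `S` denotes the (unique) PD square root `X^{1/2}` of `X`. -/


theorem stmt5 (d : ℕ) (X P S P' : Matrix (Fin d) (Fin d) ℂ)
    (hX : X.PosDef) (hP : P.PosSemidef)
    (hS : S.PosDef) (hSX : S * S = X)
    (hP' : P' = P + S⁻¹ * matPosPart (1 - S * P * S) * S⁻¹) :
    P'.PosDef ∧ (X * (P' - P)).trace = (P'⁻¹ * (P' - P)).trace := by
  have hSh : S.IsHermitian := hS.isHermitian
  have hSu : IsUnit S := hS.isUnit
  have hSdet : IsUnit S.det := (isUnit_iff_isUnit_det S).mp hSu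
  have hSinv : S⁻¹ * S = 1 := nonsing_inv_mul S hSdet
  have hSinv' : S * S⁻¹ = 1 := mul_nonsing_inv S hSdet
  have hM : (1 - S * P * S : Matrix (Fin d) (Fin d) ℂ).IsHermitian := by
    have : (S * P * S)ᴴ = S * P * S := by
      rw [conjTranspose_mul, conjTranspose_mul, hSh.eq, hP.1.eq, mul_assoc]
    exact (isHermitian_one).sub this
  set U : Matrix (Fin d) (Fin d) ℂ := (hM.eigenvectorUnitary : Matrix (Fin d) (Fin d) ℂ)
    with hUdef
  set μ : Fin d → ℝ := hM.eigenvalues with hμdef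
  have hUmem := hM.eigenvectorUnitary.2
  have hUs : U * star U = 1 := mem_unitaryGroup_iff.mp hUmem
  have hsU : star U * U = 1 := mem_unitaryGroup_iff'.mp hUmem
  have hUu : IsUnit U := ⟨⟨U, star U, hUs, hsU⟩, rfl⟩
  have hsUu : IsUnit (star U) := ⟨⟨star U, U, hsU, hUs⟩, rfl⟩
  have hNdef : matPosPart (1 - S * P * S) =
      U * Matrix.diagonal (fun i => ((max (μ i) 0 : ℝ) : ℂ)) * star U := by
    rw [matPosPart, dif_pos hM]
  set N := matPosPart (1 - S * P * S) with hN
  set Dm : Matrix (Fin d) (Fin d) ℂ :=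
    Matrix.diagonal (fun i => ((1 - μ i + max (μ i) 0 : ℝ) : ℂ)) with hDm
  have hspec : (1 - S * P * S : Matrix (Fin d) (Fin d) ℂ) =
      U * Matrix.diagonal (fun i => ((μ i : ℝ) : ℂ)) * star U := hM.spectral_theorem
  -- key identity: S * P * S + N = U * Dm * star U
  have hB : S * P * S + N = U * Dm * star U := by
    have h1 : (1 : Matrix (Fin d) (Fin d) ℂ) = U * 1 * star U := by
      rw [mul_one, hUs]
    have hSPS : S * P * S = U * (1 - Matrix.diagonal (fun i => ((μ i : ℝ) : ℂ))) * star U := by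
      have := hspec
      have h2 : S * P * S = 1 - (U * Matrix.diagonal (fun i => ((μ i : ℝ) : ℂ)) * star U) := by
        rw [← this, sub_sub_cancel]
      rw [h2, mul_sub, sub_mul, mul_one, hUs]
    rw [hSPS, hNdef, ← add_mul, ← mul_add]
    congr 1
    congr 1
    rw [hDm]
    ext i j
    by_cases hij : i = j
    · subst hij
      simp only [Matrix.sub_apply, Matrix.add_apply, Matrix.diagonal_apply_eq,
        Matrix.one_apply_eq, Function.comp_apply]
      push_cast
      ring
    · simp [Matrix.diagonal_apply_ne _ hij, Matrix.one_apply_ne hij]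
  have hDmpos : ∀ i, (0 : ℝ) < 1 - μ i + max (μ i) 0 := by
    intro i
    rcases le_or_gt (μ i) 0 with h | h
    · rw [max_eq_right h]; linarith
    · rw [max_eq_left h.le]; linarith
  have hDmpd : Dm.PosDef := by
    rw [hDm]
    refine posDef_diagonal_iff.mpr fun i => ?_
    exact Complex.zero_lt_real.mpr (hDmpos i)
  have hBpd : (U * Dm * star U).PosDef := by
    have h := posDef_conj_aux hDmpd hsUu
    rwa [Matrix.star_eq_conjTranspose U, Matrix.conjTranspose_conjTranspose] at h
  -- P' = S⁻¹ * (U * Dm * star U) * S⁻¹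
  have hP'B : P' = S⁻¹ * (U * Dm * star U) * S⁻¹ := by
    rw [hP', ← hB, mul_add, add_mul]
    congr 1
    rw [show S⁻¹ * (S * P * S) = P * S by
      rw [← mul_assoc, ← mul_assoc, hSinv, one_mul], mul_assoc, hSinv', mul_one]
  have hP'pd : P'.PosDef := by
    have h := posDef_conj_aux hBpd hS.inv.isUnit
    rw [hSh.inv.eq] at h
    rwa [hP'B]
  refine ⟨hP'pd, ?_⟩
  -- traces
  have hdiff : P' - P = S⁻¹ * N * S⁻¹ := by rw [hP', add_sub_cancel_left]
  have htrN : N.trace = ∑ i, ((max (μ i) 0 : ℝ) : ℂ) := by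
    rw [hNdef, Matrix.trace_mul_cycle, hsU, one_mul, Matrix.trace_diagonal]
  -- LHS
  have hLHS : (X * (P' - P)).trace = ∑ i, ((max (μ i) 0 : ℝ) : ℂ) := by
    rw [hdiff, ← hSX, ← htrN]
    have : S * S * (S⁻¹ * N * S⁻¹) = S * (N * S⁻¹) := by
      rw [← mul_assoc, ← mul_assoc, mul_assoc S S S⁻¹, hSinv', mul_one, mul_assoc]
    rw [this, Matrix.trace_mul_comm, mul_assoc, hSinv, mul_one]
  -- RHS
  have hUinv : U⁻¹ = star U := inv_eq_left_inv hsU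
  have hsUinv : (star U)⁻¹ = U := inv_eq_left_inv hUs
  have hBinv : (U * Dm * star U)⁻¹ = U * Dm⁻¹ * star U := by
    rw [Matrix.mul_inv_rev, Matrix.mul_inv_rev, hUinv, hsUinv, mul_assoc]
  have hP'inv : P'⁻¹ = S * (U * Dm⁻¹ * star U) * S := by
    rw [hP'B, Matrix.mul_inv_rev, Matrix.mul_inv_rev, hBinv,
      nonsing_inv_nonsing_inv S hSdet, mul_assoc]
    simp only [Matrix.mul_assoc]
  have hRHS : (P'⁻¹ * (P' - P)).trace = ∑ i, ((max (μ i) 0 : ℝ) : ℂ) := by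
    rw [hdiff, hP'inv, hNdef]
    have hsimp : S * (U * Dm⁻¹ * star U) * S * (S⁻¹ *
        (U * Matrix.diagonal (fun i => ((max (μ i) 0 : ℝ) : ℂ)) * star U) * S⁻¹) =
        S * (U * (Dm⁻¹ * Matrix.diagonal (fun i => ((max (μ i) 0 : ℝ) : ℂ))) * star U) * S⁻¹ := by
      simp only [Matrix.mul_assoc]
      rw [← Matrix.mul_assoc S S⁻¹, hSinv', Matrix.one_mul,
        ← Matrix.mul_assoc (star U) U, hsU, Matrix.one_mul]
    rw [hsimp, Matrix.trace_mul_comm, ← mul_assoc, hSinv, one_mul,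
      Matrix.trace_mul_cycle, ← mul_assoc, hsU, one_mul]
    have hDminv : Dm⁻¹ =
        Matrix.diagonal (fun i => (((1 - μ i + max (μ i) 0 : ℝ) : ℂ))⁻¹) := by
      refine inv_eq_left_inv ?_
      rw [hDm, Matrix.diagonal_mul_diagonal]
      have hfun : (fun i => (((1 - μ i + max (μ i) 0 : ℝ) : ℂ))⁻¹ *
          ((1 - μ i + max (μ i) 0 : ℝ) : ℂ)) = fun _ => (1 : ℂ) := by
        funext i
        exact inv_mul_cancel₀ (ne_of_gt (Complex.zero_lt_real.mpr (hDmpos i)))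
      rw [hfun, Matrix.diagonal_one]
    rw [hDminv, Matrix.diagonal_mul_diagonal, Matrix.trace_diagonal]
    refine Finset.sum_congr rfl fun i _ => ?_
    rcases le_or_gt (μ i) 0 with h | h
    · rw [max_eq_right h]; simp
    · rw [max_eq_left h.le]
      have h1 : ((1 - μ i + μ i : ℝ) : ℂ) = 1 := by push_cast; ring
      rw [h1, inv_one, one_mul]
  rw [hLHS, hRHS]
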